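/- For any even n ≥ 4, let G be the graph on vertex set A ∪ B with A = {1, ..., n/2} and B = {n/2+1, ..., n}, consisting of a complete graph on A, a complete graph on B, and a perfect matching between A and B (vertex i matched to i + n/2). Then δ(G) = n/2 and no set of 3 vertices percolates in 3-neighbour bootstrap percolation, i.e. m(G, 3) > 3. -/

import Mathlib

open Finset

open scoped Classical

noncomputable section

variable {V : Type*}

/-- Number of neighbours of `v` inside the set `A`. -/
def nbrsIn (G : SimpleGraph V) (A : Finset V) (v : V) : ℕ :=
  (A.filter (fun u => G.Adj v u)).card

/-- One step of the `r`-neighbour bootstrap process. -/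
def bootStep [Fintype V] (G : SimpleGraph V) (r : ℕ) (A : Finset V) : Finset V :=
  A ∪ Finset.univ.filter (fun v => r ≤ nbrsIn G A v)

/-- The sets `A_t` of the `r`-neighbour bootstrap process started at `A`. -/
def bootSeq [Fintype V] (G : SimpleGraph V) (r : ℕ) (A : Finset V) : ℕ → Finset V
  | 0 => A
  | t + 1 => bootStep G r (bootSeq G r A t)

/-- `A` is closed under the `r`-neighbour bootstrap rule. -/
def BootClosed (G : SimpleGraph V) (r : ℕ) (A : Finset V) : Prop :=
  ∀ v, r ≤ nbrsIn G A v → v ∈ A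

/-- The `r`-neighbour bootstrap closure `⟨A⟩_r`: the smallest closed superset of `A`. -/
def bootClosure [Fintype V] (G : SimpleGraph V) (r : ℕ) (A : Finset V) : Finset V :=
  Finset.univ.filter (fun v => ∀ B : Finset V, A ⊆ B → BootClosed G r B → v ∈ B)

/-- `m(G, r)`: the minimum size of a percolating set. -/
def minPerc [Fintype V] (G : SimpleGraph V) (r : ℕ) : ℕ :=
  sInf {k | ∃ A : Finset V, A.card = k ∧ bootClosure G r A = Finset.univ}

end

/-- Two cliques of size `n/2` (the lower and upper halves of `Fin n`) joined by the
perfect matching `i ↔ i + n/2`. -/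
def matchGraph (n : ℕ) : SimpleGraph (Fin n) where
  Adj i j := i ≠ j ∧ (((i : ℕ) < n / 2 ↔ (j : ℕ) < n / 2) ∨
    (j : ℕ) = (i : ℕ) + n / 2 ∨ (i : ℕ) = (j : ℕ) + n / 2)
  symm := by
    constructor
    intro i j h
    exact ⟨h.1.symm, by tauto⟩
  loopless := by
    constructor
    intro i h
    exact h.1 rfl

lemma mem_bootClosure_iff {V : Type*} [Fintype V] {G : SimpleGraph V} {r : ℕ}
    {A : Finset V} {v : V} :
    v ∈ bootClosure G r A ↔ ∀ B : Finset V, A ⊆ B → BootClosed G r B → v ∈ B := by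
  unfold bootClosure
  rw [Finset.mem_filter]
  simp only [Finset.mem_univ, true_and]

lemma matchGraph_adj {n : ℕ} {i j : Fin n} :
    (matchGraph n).Adj i j ↔ i ≠ j ∧ (((i : ℕ) < n / 2 ↔ (j : ℕ) < n / 2) ∨
      (j : ℕ) = (i : ℕ) + n / 2 ∨ (i : ℕ) = (j : ℕ) + n / 2) := Iff.rfl

lemma card_filter_val_lt (n k : ℕ) (hk : k ≤ n) :
    (univ.filter (fun j : Fin n => (j : ℕ) < k)).card = k := by
  apply Finset.card_eq_of_bijective (fun i h => (⟨i, lt_of_lt_of_le h hk⟩ : Fin n))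
  · intro a ha
    rw [mem_filter] at ha
    exact ⟨(a : ℕ), ha.2, Fin.ext rfl⟩
  · intro i h
    rw [mem_filter]
    exact ⟨mem_univ _, h⟩
  · intro i j hi hj hij
    exact congrArg Fin.val hij

/-- the matched partner, used as an upper bound witness -/
def matchOf (n : ℕ) (he : Even n) (v : Fin n) : Fin n :=
  ⟨if (v : ℕ) < n / 2 then (v : ℕ) + n / 2 else (v : ℕ) - n / 2, by
    have h2 : n % 2 = 0 := Nat.even_iff.mp he
    have := v.isLt
    split_ifs <;> omega⟩

lemma matched_eq {n : ℕ} (he : Even n) {v j : Fin n}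
    (hm : (j : ℕ) = (v : ℕ) + n / 2 ∨ (v : ℕ) = (j : ℕ) + n / 2) :
    j = matchOf n he v := by
  have h2 : n % 2 = 0 := Nat.even_iff.mp he
  have hv := v.isLt
  have hj := j.isLt
  apply Fin.ext
  show (j : ℕ) = if (v : ℕ) < n / 2 then (v : ℕ) + n / 2 else (v : ℕ) - n / 2
  split_ifs <;> omega

lemma exists_closed (n : ℕ) (hn : 4 ≤ n) (he : Even n) (A : Finset (Fin n))
    (P : Fin n → Prop) [DecidablePred P]
    (hPiff : ∀ v j : Fin n, (((v : ℕ) < n / 2) ↔ ((j : ℕ) < n / 2)) ↔ (P v ↔ P j))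
    (hA : (A.filter P).card ≤ 1) (hPcard : n / 2 ≤ (univ.filter P).card) :
    ∃ B : Finset (Fin n), A ⊆ B ∧ BootClosed (matchGraph n) 3 B ∧ B ≠ univ := by
  have h2 : n % 2 = 0 := Nat.even_iff.mp he
  refine ⟨univ.filter (fun j => ¬ P j) ∪ A, fun a ha => mem_union_right _ ha, ?_, ?_⟩
  · intro v hv
    by_contra hvB
    have hPv : P v := by
      by_contra h; exact hvB (mem_union_left _ (mem_filter.mpr ⟨mem_univ _, h⟩))
    have hle : nbrsIn (matchGraph n) (univ.filter (fun j => ¬ P j) ∪ A) v ≤ 2 := by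
      have hsub : ((univ.filter (fun j => ¬ P j) ∪ A).filter
          (fun u => (matchGraph n).Adj v u)) ⊆ insert (matchOf n he v) (A.filter P) := by
        intro j hj
        rw [mem_filter] at hj
        obtain ⟨hjB, hadj⟩ := hj
        by_cases hPj : P j
        · have hjA : j ∈ A := by
            rcases mem_union.mp hjB with h | h
            · exact absurd hPj (mem_filter.mp h).2
            · exact h
          exact mem_insert_of_mem (mem_filter.mpr ⟨hjA, hPj⟩)
        · obtain ⟨hne, hside⟩ := hadj
          rcases hside with h | h
          · exact absurd ((hPiff v j).mp h |>.mp hPv) hPj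
          · exact mem_insert.mpr (Or.inl (matched_eq he h))
      calc nbrsIn (matchGraph n) (univ.filter (fun j => ¬ P j) ∪ A) v
          ≤ (insert (matchOf n he v) (A.filter P)).card := card_le_card hsub
        _ ≤ (A.filter P).card + 1 := card_insert_le _ _
        _ ≤ 2 := by omega
    omega
  · have h5 : A.filter P ⊆ univ.filter P := filter_subset_filter P (subset_univ A)
    have h6 : (univ.filter P \ A.filter P).card
        = (univ.filter P).card - (A.filter P).card := card_sdiff_of_subset h5
    have h7 : 0 < (univ.filter P \ A.filter P).card := by
      rw [h6]; omega
    obtain ⟨v, hv⟩ := card_pos.mp h7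
    rw [mem_sdiff, mem_filter] at hv
    obtain ⟨⟨-, hPv⟩, hvA⟩ := hv
    intro hB
    have hvB : v ∈ univ.filter (fun j => ¬ P j) ∪ A := by rw [hB]; exact mem_univ v
    rcases mem_union.mp hvB with h | h
    · exact (mem_filter.mp h).2 hPv
    · exact hvA (mem_filter.mpr ⟨h, hPv⟩)

lemma degree_matchGraph (n : ℕ) (hn : 4 ≤ n) (he : Even n) (v : Fin n) :
    (matchGraph n).degree v = n / 2 := by
  have h2 : n % 2 = 0 := Nat.even_iff.mp he
  have hv := v.isLt
  show ((matchGraph n).neighborFinset v).card = n / 2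
  rw [SimpleGraph.neighborFinset_eq_filter]
  have key : univ.filter ((matchGraph n).Adj v)
      = insert (matchOf n he v)
        ((univ.filter (fun j : Fin n => ((j : ℕ) < n / 2 ↔ (v : ℕ) < n / 2))).erase v) := by
    ext j
    have hj := j.isLt
    simp only [mem_insert, mem_erase, mem_filter, mem_univ, true_and, matchGraph_adj]
    constructor
    · rintro ⟨hne, h | h⟩
      · exact Or.inr ⟨fun h' => hne (h' ▸ rfl), h.symm⟩
      · exact Or.inl (matched_eq he h)
    · rintro (rfl | ⟨hne, hiff⟩)
      · refine ⟨?_, Or.inr ?_⟩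
        · intro h
          have := congrArg Fin.val h
          simp only [matchOf] at this
          split_ifs at this <;> omega
        · show (matchOf n he v : ℕ) = (v : ℕ) + n / 2 ∨ (v : ℕ) = (matchOf n he v : ℕ) + n / 2
          simp only [matchOf]
          split_ifs <;> omega
      · exact ⟨fun h => hne (h ▸ rfl), Or.inl hiff.symm⟩
  rw [key]
  have hmem : v ∈ univ.filter (fun j : Fin n => ((j : ℕ) < n / 2 ↔ (v : ℕ) < n / 2)) :=
    mem_filter.mpr ⟨mem_univ _, Iff.rfl⟩
  have hnot : matchOf n he v ∉
      (univ.filter (fun j : Fin n => ((j : ℕ) < n / 2 ↔ (v : ℕ) < n / 2))).erase v := by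
    intro h
    have := (mem_filter.mp (mem_of_mem_erase h)).2
    simp only [matchOf] at this
    split_ifs at this <;> omega
  rw [card_insert_of_notMem hnot, card_erase_of_mem hmem]
  have hcard : (univ.filter (fun j : Fin n => ((j : ℕ) < n / 2 ↔ (v : ℕ) < n / 2))).card
      = n / 2 := by
    by_cases hvlt : (v : ℕ) < n / 2
    · have heq : (univ.filter (fun j : Fin n => ((j : ℕ) < n / 2 ↔ (v : ℕ) < n / 2)))
          = univ.filter (fun j : Fin n => (j : ℕ) < n / 2) := by
        ext j; simp [hvlt]
      rw [heq]
      exact card_filter_val_lt n (n / 2) (by omega)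
    · have heq : (univ.filter (fun j : Fin n => ((j : ℕ) < n / 2 ↔ (v : ℕ) < n / 2)))
          = univ.filter (fun j : Fin n => ¬ (j : ℕ) < n / 2) := by
        ext j; simp [hvlt]
      rw [heq]
      have hsum := card_filter_add_card_filter_not
        (s := (univ : Finset (Fin n))) (p := fun j : Fin n => (j : ℕ) < n / 2)
      rw [card_filter_val_lt n (n / 2) (by omega), card_univ, Fintype.card_fin] at hsum
      omega
  rw [hcard]
  omega

theorem stmt_8 (n : ℕ) (hn : 4 ≤ n) (he : Even n) :
    (matchGraph n).minDegree = n / 2 ∧ 3 < minPerc (matchGraph n) 3 := by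
  have h2 : n % 2 = 0 := Nat.even_iff.mp he
  haveI : Nonempty (Fin n) := ⟨⟨0, by omega⟩⟩
  constructor
  · apply le_antisymm
    · have := (matchGraph n).minDegree_le_degree ⟨0, by omega⟩
      rwa [degree_matchGraph n hn he] at this
    · exact SimpleGraph.le_minDegree_of_forall_le_degree _ _
        (fun v => (degree_matchGraph n hn he v).ge)
  · -- the set of percolating cardinalities
    set S : Set ℕ := {k | ∃ A : Finset (Fin n),
      A.card = k ∧ bootClosure (matchGraph n) 3 A = Finset.univ} with hS
    have hne : S.Nonempty := by
      refine ⟨n, univ, by simp, ?_⟩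
      apply Finset.eq_univ_of_forall
      intro v
      exact mem_bootClosure_iff.mpr (fun B hB _ => hB (mem_univ v))
    have hall : ∀ k ∈ S, 3 < k := by
      rintro k ⟨A, hAcard, hAperc⟩
      by_contra hk
      push_neg at hk
      have hA3 : A.card ≤ 3 := hAcard ▸ hk
      -- one of the two sides contains at most one point of A
      have hsplit := card_filter_add_card_filter_not
        (s := A) (p := fun j : Fin n => (j : ℕ) < n / 2)
      have hmin : (A.filter (fun j : Fin n => (j : ℕ) < n / 2)).card ≤ 1 ∨
          (A.filter (fun j : Fin n => ¬ (j : ℕ) < n / 2)).card ≤ 1 := by omega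
      have hlowcard : (univ.filter (fun j : Fin n => (j : ℕ) < n / 2)).card = n / 2 :=
        card_filter_val_lt n (n / 2) (by omega)
      have hB : ∃ B : Finset (Fin n), A ⊆ B ∧ BootClosed (matchGraph n) 3 B ∧ B ≠ univ := by
        rcases hmin with h | h
        · exact exists_closed n hn he A _ (fun v j => Iff.rfl) h hlowcard.ge
        · refine exists_closed n hn he A _ (fun v j => not_iff_not.symm) h ?_
          have hsum := card_filter_add_card_filter_not
            (s := (univ : Finset (Fin n))) (p := fun j : Fin n => (j : ℕ) < n / 2)
          rw [hlowcard, card_univ, Fintype.card_fin] at hsum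
          omega
      obtain ⟨B, hAB, hBclosed, hBne⟩ := hB
      apply hBne
      apply Finset.eq_univ_of_forall
      intro v
      have hv : v ∈ bootClosure (matchGraph n) 3 A := by
        rw [hAperc]; exact mem_univ v
      exact mem_bootClosure_iff.mp hv B hAB hBclosed
    have := Nat.sInf_mem hne
    exact hall _ this
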